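/- arXiv:1805.10526 — 2 statements merged into one kernel-verified Lean document; each statement's English description precedes it below -/
import Mathlib

section
/- Let l ∈ ℝ and let q : (0,∞) → ℝ. Let B be twice continuously differentiable on {(x,y) : 0 < y < x} and define u on {(z,s) : 0 < s < z} by u(z,s) := (z−s)^{l} B(√z + √s, √z − √s); equivalently, u(z,s) = (xy)^{l} B(x,y) with z = (x+y)²/4, s = (x−y)²/4. Then u is twice continuously differentiable, and B satisfies ∂²B/∂x²(x,y) − ∂²B/∂y²(x,y) + (l(l+1)/y² − l(l+1)/x² − q(x)) B(x,y) = 0 for all 0 < y < x if and only if u satisfies ∂²u/∂z∂s (z,s) + (l/(z−s)) ∂u/∂z (z,s) − (l/(z−s)) ∂u/∂s (z,s) = (1/(4√(zs))) q(√z + √s) u(z,s) for all 0 < s < z. -/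
open MeasureTheory Set Filter Topology

private lemma goursat_region_open : IsOpen {pr : ℝ × ℝ | 0 < pr.2 ∧ pr.2 < pr.1} :=
  (isOpen_lt continuous_const continuous_snd).inter (isOpen_lt continuous_snd continuous_fst)

set_option maxHeartbeats 2000000 in
private lemma goursat_core (l : ℝ) (q : ℝ → ℝ) (B : ℝ → ℝ → ℝ)
    (hB : ContDiffOn ℝ 2 (fun pr : ℝ × ℝ => B pr.1 pr.2)
      {pr : ℝ × ℝ | 0 < pr.2 ∧ pr.2 < pr.1})
    (u : ℝ → ℝ → ℝ)
    (hu : ∀ z s : ℝ,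
      u z s = (z - s) ^ l * B (Real.sqrt z + Real.sqrt s) (Real.sqrt z - Real.sqrt s))
    {z s : ℝ} (hs : 0 < s) (hzs : s < z) :
    deriv (fun z' => deriv (fun s' => u z' s') s) z
      + (l / (z - s)) * deriv (fun z' => u z' s) z
      - (l / (z - s)) * deriv (fun s' => u z s') s
      - (1 / (4 * Real.sqrt (z * s))) * q (Real.sqrt z + Real.sqrt s) * u z s
    = ((z - s) ^ l / (4 * Real.sqrt z * Real.sqrt s)) *
      (deriv (deriv (fun t => B t (Real.sqrt z - Real.sqrt s))) (Real.sqrt z + Real.sqrt s)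
        - deriv (deriv (fun t => B (Real.sqrt z + Real.sqrt s) t)) (Real.sqrt z - Real.sqrt s)
        + (l * (l + 1) / (Real.sqrt z - Real.sqrt s) ^ 2
            - l * (l + 1) / (Real.sqrt z + Real.sqrt s) ^ 2
            - q (Real.sqrt z + Real.sqrt s))
          * B (Real.sqrt z + Real.sqrt s) (Real.sqrt z - Real.sqrt s)) := by
  have hz : 0 < z := hs.trans hzs
  set Ω : Set (ℝ × ℝ) := {pr : ℝ × ℝ | 0 < pr.2 ∧ pr.2 < pr.1} with hΩdef
  have hΩo : IsOpen Ω := goursat_region_open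
  have hrz : 0 < Real.sqrt z := Real.sqrt_pos.2 hz
  have hrs : 0 < Real.sqrt s := Real.sqrt_pos.2 hs
  have hrsz : Real.sqrt s < Real.sqrt z := Real.sqrt_lt_sqrt hs.le hzs
  have hz2 : Real.sqrt z ^ 2 = z := Real.sq_sqrt hz.le
  have hs2 : Real.sqrt s ^ 2 = s := Real.sq_sqrt hs.le
  have hy : 0 < Real.sqrt z - Real.sqrt s := sub_pos.2 hrsz
  have hyx : Real.sqrt z - Real.sqrt s < Real.sqrt z + Real.sqrt s := by linarith
  have hP : ((Real.sqrt z + Real.sqrt s, Real.sqrt z - Real.sqrt s) : ℝ × ℝ) ∈ Ω := ⟨hy, hyx⟩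
  set f' := fderiv ℝ (fun pr : ℝ × ℝ => B pr.1 pr.2) with hf'def
  set f'' := fderiv ℝ f' with hf''def
  have hfd : ∀ p ∈ Ω, HasFDerivAt (fun pr : ℝ × ℝ => B pr.1 pr.2) (f' p) p := fun p hp =>
    ((hB.differentiableOn (by norm_num)).differentiableAt (hΩo.mem_nhds hp)).hasFDerivAt
  have hC1 : ContDiffOn ℝ 1 f' Ω := by
    have h11 : ((2 : WithTop ℕ∞)) = 1 + 1 := by norm_num
    rw [h11] at hB
    exact ((contDiffOn_succ_iff_fderiv_of_isOpen hΩo).1 hB).2.2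
  have hfd' : ∀ p ∈ Ω, HasFDerivAt f' (f'' p) p := fun p hp =>
    ((hC1.differentiableOn one_ne_zero).differentiableAt (hΩo.mem_nhds hp)).hasFDerivAt
  have hsymm : f'' (Real.sqrt z + Real.sqrt s, Real.sqrt z - Real.sqrt s) (1, 0) (0, 1)
      = f'' (Real.sqrt z + Real.sqrt s, Real.sqrt z - Real.sqrt s) (0, 1) (1, 0) :=
    second_derivative_symmetric_of_eventually
      (Filter.eventually_of_mem (hΩo.mem_nhds hP) (fun p hp => hfd p hp)) (hfd' _ hP) _ _
  have hmem : ∀ z', s < z' → ((Real.sqrt z' + Real.sqrt s, Real.sqrt z' - Real.sqrt s) : ℝ × ℝ) ∈ Ω :=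
    fun z' h => ⟨sub_pos.2 (Real.sqrt_lt_sqrt hs.le h), by
      show Real.sqrt z' - Real.sqrt s < Real.sqrt z' + Real.sqrt s
      linarith⟩
  -- partial derivative in s
  have hDs : ∀ z', s < z' →
      HasDerivAt (fun s' => u z' s')
        (-(l * (z' - s) ^ (l - 1)) * B (Real.sqrt z' + Real.sqrt s) (Real.sqrt z' - Real.sqrt s)
          + (z' - s) ^ l *
            (f' (Real.sqrt z' + Real.sqrt s, Real.sqrt z' - Real.sqrt s)
              (1 / (2 * Real.sqrt s), -(1 / (2 * Real.sqrt s))))) s := by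
    intro z' hz'
    have hrw : (fun s' => u z' s')
        = fun s' => (z' - s') ^ l * (fun pr : ℝ × ℝ => B pr.1 pr.2)
            (Real.sqrt z' + Real.sqrt s', Real.sqrt z' - Real.sqrt s') :=
      funext fun s' => hu z' s'
    rw [hrw]
    have h1 : HasDerivAt (fun s' : ℝ => (z' - s') ^ l) (-(l * (z' - s) ^ (l - 1))) s := by
      have h := ((hasDerivAt_id s).const_sub z').rpow_const (p := l)
        (Or.inl (sub_ne_zero.2 hz'.ne'))
      convert h using 1
      · rfl
      simp only [id_eq]
      ring
    have hcurve : HasDerivAt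
        (fun s' : ℝ => ((Real.sqrt z' + Real.sqrt s', Real.sqrt z' - Real.sqrt s') : ℝ × ℝ))
        ((1 / (2 * Real.sqrt s), -(1 / (2 * Real.sqrt s)))) s :=
      ((Real.hasDerivAt_sqrt hs.ne').const_add (Real.sqrt z')).prodMk
        ((Real.hasDerivAt_sqrt hs.ne').const_sub (Real.sqrt z'))
    have h2 : HasDerivAt
        (fun s' => (fun pr : ℝ × ℝ => B pr.1 pr.2)
          (Real.sqrt z' + Real.sqrt s', Real.sqrt z' - Real.sqrt s'))
        (f' (Real.sqrt z' + Real.sqrt s, Real.sqrt z' - Real.sqrt s)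
          (1 / (2 * Real.sqrt s), -(1 / (2 * Real.sqrt s)))) s :=
      by have := (hfd _ (hmem z' hz')).comp_hasDerivAt s hcurve; exact this
    exact h1.mul h2
  -- curve in z
  have hcurvez : HasDerivAt
      (fun z' : ℝ => ((Real.sqrt z' + Real.sqrt s, Real.sqrt z' - Real.sqrt s) : ℝ × ℝ))
      ((1 / (2 * Real.sqrt z), 1 / (2 * Real.sqrt z))) z :=
    ((Real.hasDerivAt_sqrt hz.ne').add_const (Real.sqrt s)).prodMk
      ((Real.hasDerivAt_sqrt hz.ne').sub_const (Real.sqrt s))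
  have hrpz : HasDerivAt (fun z' : ℝ => (z' - s) ^ l) (l * (z - s) ^ (l - 1)) z := by
    have h := ((hasDerivAt_id z).sub_const s).rpow_const (p := l)
      (Or.inl (sub_ne_zero.2 hzs.ne'))
    convert h using 1
    · rfl
    simp only [id_eq]
    ring
  have hfB : HasDerivAt
      (fun z' => (fun pr : ℝ × ℝ => B pr.1 pr.2)
        (Real.sqrt z' + Real.sqrt s, Real.sqrt z' - Real.sqrt s))
      (f' (Real.sqrt z + Real.sqrt s, Real.sqrt z - Real.sqrt s)
        (1 / (2 * Real.sqrt z), 1 / (2 * Real.sqrt z))) z :=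
    by have := (hfd _ hP).comp_hasDerivAt z hcurvez; exact this
  -- partial derivative in z
  have hDz : HasDerivAt (fun z' => u z' s)
      (l * (z - s) ^ (l - 1) * B (Real.sqrt z + Real.sqrt s) (Real.sqrt z - Real.sqrt s)
        + (z - s) ^ l *
          (f' (Real.sqrt z + Real.sqrt s, Real.sqrt z - Real.sqrt s)
            (1 / (2 * Real.sqrt z), 1 / (2 * Real.sqrt z)))) z := by
    have hrw : (fun z' => u z' s)
        = fun z' => (z' - s) ^ l * (fun pr : ℝ × ℝ => B pr.1 pr.2)
            (Real.sqrt z' + Real.sqrt s, Real.sqrt z' - Real.sqrt s) :=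
      funext fun z' => hu z' s
    rw [hrw]
    exact hrpz.mul hfB
  -- mixed second derivative
  have h4 : HasDerivAt (fun z' => f' (Real.sqrt z' + Real.sqrt s, Real.sqrt z' - Real.sqrt s))
      (f'' (Real.sqrt z + Real.sqrt s, Real.sqrt z - Real.sqrt s)
        (1 / (2 * Real.sqrt z), 1 / (2 * Real.sqrt z))) z :=
    (hfd' _ hP).comp_hasDerivAt z hcurvez
  have h5 : HasDerivAt
      (fun z' => f' (Real.sqrt z' + Real.sqrt s, Real.sqrt z' - Real.sqrt s)
        (1 / (2 * Real.sqrt s), -(1 / (2 * Real.sqrt s))))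
      (f'' (Real.sqrt z + Real.sqrt s, Real.sqrt z - Real.sqrt s)
        (1 / (2 * Real.sqrt z), 1 / (2 * Real.sqrt z))
        (1 / (2 * Real.sqrt s), -(1 / (2 * Real.sqrt s)))) z := by
    have h := h4.clm_apply (hasDerivAt_const z
      ((1 / (2 * Real.sqrt s), -(1 / (2 * Real.sqrt s))) : ℝ × ℝ))
    simpa using h
  have h1' : HasDerivAt (fun z' : ℝ => -(l * (z' - s) ^ (l - 1)))
      (-(l * ((l - 1) * (z - s) ^ (l - 2)))) z := by
    have h := (((hasDerivAt_id z).sub_const s).rpow_const (p := l - 1)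
      (Or.inl (sub_ne_zero.2 hzs.ne'))).const_mul l
    have h2 : HasDerivAt (fun y : ℝ => -(l * (id y - s) ^ (l - 1)))
        (-(l * (1 * (l - 1) * (id z - s) ^ (l - 1 - 1)))) z := h.fun_neg
    convert h2 using 1
    · rfl
    simp only [id_eq]
    rw [show l - 1 - 1 = l - 2 by ring]
    ring
  have hfB2 : HasDerivAt
      (fun z' => B (Real.sqrt z' + Real.sqrt s) (Real.sqrt z' - Real.sqrt s))
      (f' (Real.sqrt z + Real.sqrt s, Real.sqrt z - Real.sqrt s)
        (1 / (2 * Real.sqrt z), 1 / (2 * Real.sqrt z))) z := hfB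
  have hGd : HasDerivAt
      (fun z' => -(l * (z' - s) ^ (l - 1)) * B (Real.sqrt z' + Real.sqrt s) (Real.sqrt z' - Real.sqrt s)
          + (z' - s) ^ l *
            (f' (Real.sqrt z' + Real.sqrt s, Real.sqrt z' - Real.sqrt s)
              (1 / (2 * Real.sqrt s), -(1 / (2 * Real.sqrt s)))))
      (-(l * ((l - 1) * (z - s) ^ (l - 2)))
          * B (Real.sqrt z + Real.sqrt s) (Real.sqrt z - Real.sqrt s)
        + -(l * (z - s) ^ (l - 1)) *
          (f' (Real.sqrt z + Real.sqrt s, Real.sqrt z - Real.sqrt s)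
            (1 / (2 * Real.sqrt z), 1 / (2 * Real.sqrt z)))
        + (l * (z - s) ^ (l - 1) *
            (f' (Real.sqrt z + Real.sqrt s, Real.sqrt z - Real.sqrt s)
              (1 / (2 * Real.sqrt s), -(1 / (2 * Real.sqrt s))))
          + (z - s) ^ l *
            (f'' (Real.sqrt z + Real.sqrt s, Real.sqrt z - Real.sqrt s)
              (1 / (2 * Real.sqrt z), 1 / (2 * Real.sqrt z))
              (1 / (2 * Real.sqrt s), -(1 / (2 * Real.sqrt s)))))) z :=
    (h1'.mul hfB2).add (hrpz.mul h5)
  have hevdz : (fun z' => deriv (fun s' => u z' s') s) =ᶠ[𝓝 z]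
      (fun z' => -(l * (z' - s) ^ (l - 1)) * B (Real.sqrt z' + Real.sqrt s) (Real.sqrt z' - Real.sqrt s)
          + (z' - s) ^ l *
            (f' (Real.sqrt z' + Real.sqrt s, Real.sqrt z' - Real.sqrt s)
              (1 / (2 * Real.sqrt s), -(1 / (2 * Real.sqrt s))))) := by
    filter_upwards [eventually_gt_nhds hzs] with z' hz'
    exact (hDs z' hz').deriv
  have hDzs := hevdz.deriv_eq.trans hGd.deriv
  -- B second partials
  have hBx : ∀ t, Real.sqrt z - Real.sqrt s < t →
      HasDerivAt (fun t' => B t' (Real.sqrt z - Real.sqrt s)) (f' (t, Real.sqrt z - Real.sqrt s) (1, 0)) t := by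
    intro t ht
    have hc : HasDerivAt (fun t' : ℝ => ((t', Real.sqrt z - Real.sqrt s) : ℝ × ℝ)) ((1 : ℝ), (0 : ℝ)) t :=
      (hasDerivAt_id t).prodMk (hasDerivAt_const t _)
    exact (hfd (t, Real.sqrt z - Real.sqrt s) ⟨hy, ht⟩).comp_hasDerivAt t hc
  have hBxxval : deriv (deriv (fun t => B t (Real.sqrt z - Real.sqrt s))) (Real.sqrt z + Real.sqrt s)
      = f'' (Real.sqrt z + Real.sqrt s, Real.sqrt z - Real.sqrt s) (1, 0) (1, 0) := by
    have hev : deriv (fun t => B t (Real.sqrt z - Real.sqrt s)) =ᶠ[𝓝 (Real.sqrt z + Real.sqrt s)]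
        fun t => f' (t, Real.sqrt z - Real.sqrt s) (1, 0) := by
      filter_upwards [eventually_gt_nhds hyx] with t ht
      exact (hBx t ht).deriv
    have hstep : HasDerivAt (fun t => f' (t, Real.sqrt z - Real.sqrt s) (1, 0))
        (f'' (Real.sqrt z + Real.sqrt s, Real.sqrt z - Real.sqrt s) (1, 0) (1, 0)) (Real.sqrt z + Real.sqrt s) := by
      have hc : HasDerivAt (fun t' : ℝ => ((t', Real.sqrt z - Real.sqrt s) : ℝ × ℝ)) ((1 : ℝ), (0 : ℝ))
          (Real.sqrt z + Real.sqrt s) := (hasDerivAt_id _).prodMk (hasDerivAt_const _ _)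
      have h := ((hfd' _ hP).comp_hasDerivAt (Real.sqrt z + Real.sqrt s) hc).clm_apply
        (hasDerivAt_const (Real.sqrt z + Real.sqrt s) (((1 : ℝ), (0 : ℝ)) : ℝ × ℝ))
      simpa using h
    exact hev.deriv_eq.trans hstep.deriv
  have hBy : ∀ t, 0 < t → t < Real.sqrt z + Real.sqrt s →
      HasDerivAt (fun t' => B (Real.sqrt z + Real.sqrt s) t')
        (f' (Real.sqrt z + Real.sqrt s, t) (0, 1)) t := by
    intro t ht1 ht2
    have hc : HasDerivAt (fun t' : ℝ => ((Real.sqrt z + Real.sqrt s, t') : ℝ × ℝ)) ((0 : ℝ), (1 : ℝ)) t :=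
      (hasDerivAt_const t _).prodMk (hasDerivAt_id t)
    exact (hfd (Real.sqrt z + Real.sqrt s, t) ⟨ht1, ht2⟩).comp_hasDerivAt t hc
  have hByyval : deriv (deriv (fun t => B (Real.sqrt z + Real.sqrt s) t)) (Real.sqrt z - Real.sqrt s)
      = f'' (Real.sqrt z + Real.sqrt s, Real.sqrt z - Real.sqrt s) (0, 1) (0, 1) := by
    have hev : deriv (fun t => B (Real.sqrt z + Real.sqrt s) t) =ᶠ[𝓝 (Real.sqrt z - Real.sqrt s)]
        fun t => f' (Real.sqrt z + Real.sqrt s, t) (0, 1) := by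
      filter_upwards [eventually_gt_nhds hy, eventually_lt_nhds hyx] with t ht1 ht2
      exact (hBy t ht1 ht2).deriv
    have hstep : HasDerivAt (fun t => f' (Real.sqrt z + Real.sqrt s, t) (0, 1))
        (f'' (Real.sqrt z + Real.sqrt s, Real.sqrt z - Real.sqrt s) (0, 1) (0, 1)) (Real.sqrt z - Real.sqrt s) := by
      have hc : HasDerivAt (fun t' : ℝ => ((Real.sqrt z + Real.sqrt s, t') : ℝ × ℝ)) ((0 : ℝ), (1 : ℝ))
          (Real.sqrt z - Real.sqrt s) := (hasDerivAt_const _ _).prodMk (hasDerivAt_id _)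
      have h := ((hfd' _ hP).comp_hasDerivAt (Real.sqrt z - Real.sqrt s) hc).clm_apply
        (hasDerivAt_const (Real.sqrt z - Real.sqrt s) (((0 : ℝ), (1 : ℝ)) : ℝ × ℝ))
      simpa using h
    exact hev.deriv_eq.trans hstep.deriv
  -- linearity evaluations
  have hvw : ((1 / (2 * Real.sqrt z), 1 / (2 * Real.sqrt z)) : ℝ × ℝ)
      = (1 / (2 * Real.sqrt z)) • (((1, 0) : ℝ × ℝ) + ((0, 1) : ℝ × ℝ)) := by
    simp [Prod.ext_iff]
  have hvs : ((1 / (2 * Real.sqrt s), -(1 / (2 * Real.sqrt s))) : ℝ × ℝ)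
      = (1 / (2 * Real.sqrt s)) • (((1, 0) : ℝ × ℝ) - ((0, 1) : ℝ × ℝ)) := by
    simp [Prod.ext_iff]
  have hfw : f' (Real.sqrt z + Real.sqrt s, Real.sqrt z - Real.sqrt s)
        (1 / (2 * Real.sqrt z), 1 / (2 * Real.sqrt z))
      = (1 / (2 * Real.sqrt z)) *
        (f' (Real.sqrt z + Real.sqrt s, Real.sqrt z - Real.sqrt s) (1, 0)
          + f' (Real.sqrt z + Real.sqrt s, Real.sqrt z - Real.sqrt s) (0, 1)) := by
    rw [hvw, _root_.map_smul, _root_.map_add, smul_eq_mul]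
  have hfvs : f' (Real.sqrt z + Real.sqrt s, Real.sqrt z - Real.sqrt s)
        (1 / (2 * Real.sqrt s), -(1 / (2 * Real.sqrt s)))
      = (1 / (2 * Real.sqrt s)) *
        (f' (Real.sqrt z + Real.sqrt s, Real.sqrt z - Real.sqrt s) (1, 0)
          - f' (Real.sqrt z + Real.sqrt s, Real.sqrt z - Real.sqrt s) (0, 1)) := by
    rw [hvs, _root_.map_smul, _root_.map_sub, smul_eq_mul]
  have hfwvs : f'' (Real.sqrt z + Real.sqrt s, Real.sqrt z - Real.sqrt s)
        (1 / (2 * Real.sqrt z), 1 / (2 * Real.sqrt z))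
        (1 / (2 * Real.sqrt s), -(1 / (2 * Real.sqrt s)))
      = (1 / (2 * Real.sqrt z)) * (1 / (2 * Real.sqrt s)) *
        (f'' (Real.sqrt z + Real.sqrt s, Real.sqrt z - Real.sqrt s) (1, 0) (1, 0)
          - f'' (Real.sqrt z + Real.sqrt s, Real.sqrt z - Real.sqrt s) (0, 1) (0, 1)) := by
    rw [hvw, hvs]
    simp only [_root_.map_smul, _root_.map_add, _root_.map_sub, ContinuousLinearMap.smul_apply,
      ContinuousLinearMap.add_apply, ContinuousLinearMap.sub_apply, smul_eq_mul]
    rw [hsymm]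
    ring
  -- assemble
  rw [hDzs, hDz.deriv, (hDs z hzs).deriv, hBxxval, hByyval, hu z s, hfw, hfvs, hfwvs]
  have hT1 : (z - s) ^ (l - 1) = (z - s) ^ l / (z - s) := by
    rw [Real.rpow_sub (by linarith), Real.rpow_one]
  have hT2 : (z - s) ^ (l - 2) = (z - s) ^ l / (z - s) ^ 2 := by
    rw [Real.rpow_sub (by linarith), show ((2 : ℝ)) = ((2 : ℕ) : ℝ) by norm_num,
      Real.rpow_natCast]
  have hzs2 : z - s = Real.sqrt z ^ 2 - Real.sqrt s ^ 2 := by rw [hz2, hs2]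
  have e1 : Real.sqrt z ≠ 0 := hrz.ne'
  have e2 : Real.sqrt s ≠ 0 := hrs.ne'
  have e3 : Real.sqrt z ^ 2 - Real.sqrt s ^ 2 ≠ 0 := by nlinarith
  have e4 : Real.sqrt z - Real.sqrt s ≠ 0 := hy.ne'
  have e5 : Real.sqrt z + Real.sqrt s ≠ 0 := by positivity
  rw [hT1, hT2, Real.sqrt_mul hz.le, hzs2]
  set a := Real.sqrt z with hadef
  set b := Real.sqrt s with hbdef
  field_simp
  ring

/-- The change of variables z = (x+y)²/4, s = (x−y)²/4, u(z,s) = (z−s)^l B(x,y)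
transforms the hyperbolic Goursat equation (2.7) for the Gelfand–Levitan kernel into
the canonical form (2.10). -/
theorem goursat_change_of_variables
    (l : ℝ) (q : ℝ → ℝ) (B : ℝ → ℝ → ℝ)
    (hB : ContDiffOn ℝ 2 (fun pr : ℝ × ℝ => B pr.1 pr.2)
      {pr : ℝ × ℝ | 0 < pr.2 ∧ pr.2 < pr.1})
    (u : ℝ → ℝ → ℝ)
    (hu : ∀ z s : ℝ,
      u z s = (z - s) ^ l * B (Real.sqrt z + Real.sqrt s) (Real.sqrt z - Real.sqrt s)) :
    ContDiffOn ℝ 2 (fun pr : ℝ × ℝ => u pr.1 pr.2) {pr : ℝ × ℝ | 0 < pr.2 ∧ pr.2 < pr.1} ∧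
    ((∀ x y : ℝ, 0 < y → y < x →
        deriv (deriv (fun t => B t y)) x - deriv (deriv (fun t => B x t)) y
          + (l * (l + 1) / y ^ 2 - l * (l + 1) / x ^ 2 - q x) * B x y = 0) ↔
      (∀ z s : ℝ, 0 < s → s < z →
        deriv (fun z' => deriv (fun s' => u z' s') s) z
          + (l / (z - s)) * deriv (fun z' => u z' s) z
          - (l / (z - s)) * deriv (fun s' => u z s') s
          = (1 / (4 * Real.sqrt (z * s))) * q (Real.sqrt z + Real.sqrt s) * u z s)) := by
  constructor
  · -- smoothness of u
    intro p hp
    have hp2 : 0 < p.2 := hp.1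
    have hp21 : p.2 < p.1 := hp.2
    have hp1 : 0 < p.1 := hp2.trans hp21
    have hrw : (fun pr : ℝ × ℝ => u pr.1 pr.2)
        = fun pr : ℝ × ℝ => (pr.1 - pr.2) ^ l *
            B (Real.sqrt pr.1 + Real.sqrt pr.2) (Real.sqrt pr.1 - Real.sqrt pr.2) :=
      funext fun pr => hu pr.1 pr.2
    rw [hrw]
    apply ContDiffAt.contDiffWithinAt
    have h1 : ContDiffAt ℝ 2 (fun pr : ℝ × ℝ => (pr.1 - pr.2) ^ l) p := by
      apply ContDiffAt.rpow_const_of_ne (contDiffAt_fst.sub contDiffAt_snd)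
      show p.1 - p.2 ≠ 0
      exact sub_ne_zero.2 (ne_of_gt hp21)
    have hsq1 : ContDiffAt ℝ 2 (fun pr : ℝ × ℝ => Real.sqrt pr.1) p := by
      have := (Real.contDiffAt_sqrt (n := 2) hp1.ne').comp p (contDiffAt_fst (p := p))
      exact this
    have hsq2 : ContDiffAt ℝ 2 (fun pr : ℝ × ℝ => Real.sqrt pr.2) p := by
      have := (Real.contDiffAt_sqrt (n := 2) hp2.ne').comp p (contDiffAt_snd (p := p))
      exact this
    have hφ : ContDiffAt ℝ 2
        (fun pr : ℝ × ℝ =>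
          ((Real.sqrt pr.1 + Real.sqrt pr.2, Real.sqrt pr.1 - Real.sqrt pr.2) : ℝ × ℝ)) p :=
      (hsq1.add hsq2).prodMk (hsq1.sub hsq2)
    have hmem : ((Real.sqrt p.1 + Real.sqrt p.2, Real.sqrt p.1 - Real.sqrt p.2) : ℝ × ℝ)
        ∈ {pr : ℝ × ℝ | 0 < pr.2 ∧ pr.2 < pr.1} := by
      constructor
      · exact sub_pos.2 (Real.sqrt_lt_sqrt hp2.le hp21)
      · have := Real.sqrt_pos.2 hp2
        show Real.sqrt p.1 - Real.sqrt p.2 < Real.sqrt p.1 + Real.sqrt p.2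
        linarith
    have hBc : ContDiffAt ℝ 2 (fun pr : ℝ × ℝ => B pr.1 pr.2)
        ((Real.sqrt p.1 + Real.sqrt p.2, Real.sqrt p.1 - Real.sqrt p.2) : ℝ × ℝ) :=
      hB.contDiffAt (goursat_region_open.mem_nhds hmem)
    have h2 : ContDiffAt ℝ 2
        (fun pr : ℝ × ℝ =>
          B (Real.sqrt pr.1 + Real.sqrt pr.2) (Real.sqrt pr.1 - Real.sqrt pr.2)) p := by
      have := hBc.comp p hφ
      exact this
    exact h1.mul h2
  · constructor
    · -- forward direction
      intro hBeq z s hs hzs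
      have hz : 0 < z := hs.trans hzs
      have key := goursat_core l q B hB u hu hs hzs
      have hy : 0 < Real.sqrt z - Real.sqrt s := sub_pos.2 (Real.sqrt_lt_sqrt hs.le hzs)
      have hyx : Real.sqrt z - Real.sqrt s < Real.sqrt z + Real.sqrt s := by
        have := Real.sqrt_pos.2 hs; linarith
      rw [hBeq _ _ hy hyx, mul_zero] at key
      linarith [key]
    · -- reverse direction
      intro hueq x y hy hyx
      have hx0 : 0 < x := hy.trans hyx
      set z := ((x + y) / 2) ^ 2 with hzdef
      set s := ((x - y) / 2) ^ 2 with hsdef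
      have hxy1 : (0 : ℝ) < (x + y) / 2 := by linarith
      have hxy2 : (0 : ℝ) < (x - y) / 2 := by linarith
      have hs : 0 < s := by positivity
      have hzs : s < z := by
        rw [hzdef, hsdef]
        have : (x - y) / 2 < (x + y) / 2 := by linarith
        nlinarith
      have hsz : Real.sqrt z = (x + y) / 2 := by rw [hzdef, Real.sqrt_sq hxy1.le]
      have hss : Real.sqrt s = (x - y) / 2 := by rw [hsdef, Real.sqrt_sq hxy2.le]
      have key := goursat_core l q B hB u hu hs hzs
      have h0 := hueq z s hs hzs
      rw [h0, sub_self] at key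
      rw [hsz, hss, show (x + y) / 2 + (x - y) / 2 = x by ring,
        show (x + y) / 2 - (x - y) / 2 = y by ring] at key
      have hc : ((z - s) ^ l / (4 * ((x + y) / 2) * ((x - y) / 2))) ≠ 0 := by
        apply div_ne_zero
        · exact (Real.rpow_pos_of_pos (sub_pos.2 hzs) l).ne'
        · have : (0 : ℝ) < 4 * ((x + y) / 2) * ((x - y) / 2) := by positivity
          exact this.ne'
      exact ((mul_eq_zero.1 key.symm).resolve_left hc)
end

section
/- Let l ≥ −1/2 and fix 0 < η < ξ. For 0 ≤ s < η and z ≥ ξ set t(z,s) := ((z²−ξ²)(η²−s²))/((z²−η²)(ξ²−s²)) and define v₃(z,s) := (((z²−η²)(ξ²−s²))/((z²−s²)(ξ²−η²)))^{l} · Σ_{k=0}^{∞} ((−l)_k/k!)² t(z,s)^{k}. Then t(z,s) ∈ [0,1) and the series converges on this region; v₃ is twice continuously differentiable on {(z,s) : 0 < s < η, ξ < z} and satisfies there the partial differential equation ∂²v₃/∂z∂s + (4l(l+1)zs/(z²−s²)²) v₃ = 0; moreover v₃(ξ,s) = 1 for all s ∈ [0,η] and v₃(z,η) = 1 for all z ∈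 [ξ,∞). -/
open Set

/-- The Gauss hypergeometric series ₂F₁(−l,−l;1;t), written with Pochhammer symbols. -/
noncomputable def hypSum (l t : ℝ) : ℝ :=
  ∑' k : ℕ, ((ascPochhammer ℝ k).eval (-l) / (Nat.factorial k : ℝ)) ^ 2 * t ^ k

/-- The Riemann function v₃ of (3.7) for the Marchenko transformation operator near ∞. -/
noncomputable def riemannV3 (l z s ξ η : ℝ) : ℝ :=
  (((z ^ 2 - η ^ 2) * (ξ ^ 2 - s ^ 2)) / ((z ^ 2 - s ^ 2) * (ξ ^ 2 - η ^ 2))) ^ l *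
    hypSum l (((z ^ 2 - ξ ^ 2) * (η ^ 2 - s ^ 2)) / ((z ^ 2 - η ^ 2) * (ξ ^ 2 - s ^ 2)))

section RV3Aux

open Filter Topology

namespace RV3

noncomputable def c (l : ℝ) (k : ℕ) : ℝ :=
  ((ascPochhammer ℝ k).eval (-l) / (Nat.factorial k : ℝ)) ^ 2

noncomputable def d1 (a : ℕ → ℝ) (k : ℕ) : ℝ := ((k : ℝ) + 1) * a (k + 1)

lemma c_succ (l : ℝ) (k : ℕ) :
    c l (k + 1) = (((k : ℝ) - l) / ((k : ℝ) + 1)) ^ 2 * c l k := by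
  have hfk : (Nat.factorial k : ℝ) ≠ 0 := Nat.cast_ne_zero.2 k.factorial_ne_zero
  have hk1 : ((k : ℝ) + 1) ≠ 0 := by positivity
  have hfac : (Nat.factorial (k + 1) : ℝ) = ((k : ℝ) + 1) * (Nat.factorial k : ℝ) := by
    rw [Nat.factorial_succ]; push_cast; ring
  simp only [c, ascPochhammer_succ_eval, hfac]
  field_simp
  ring

lemma c_rec (l : ℝ) (k : ℕ) :
    ((k : ℝ) + 1) ^ 2 * c l (k + 1) = ((k : ℝ) - l) ^ 2 * c l k := by
  have hk1 : ((k : ℝ) + 1) ≠ 0 := by positivity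
  rw [c_succ]
  field_simp

/-- Nonnegative sequences whose consecutive ratio tends to 1. -/
structure Nice (a : ℕ → ℝ) : Prop where
  nonneg : ∀ k, 0 ≤ a k
  ratio : ∃ ρ : ℕ → ℝ, (∀ k, 0 ≤ ρ k) ∧ (∀ k, a (k + 1) = ρ k * a k) ∧
    Tendsto ρ atTop (𝓝 1)

lemma nice_c (l : ℝ) : Nice (c l) := by
  refine ⟨fun k => sq_nonneg _, ⟨fun k => (((k : ℝ) - l) / ((k : ℝ) + 1)) ^ 2,
    fun k => sq_nonneg _, fun k => c_succ l k, ?_⟩⟩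
  have h0 : Tendsto (fun k : ℕ => (l + 1) / ((k : ℝ) + 1)) atTop (𝓝 0) := by
    have := (tendsto_const_div_atTop_nhds_zero_nat (l + 1)).comp (tendsto_add_atTop_nat 1)
    exact this.congr fun k => by simp [Function.comp]
  have h1 : Tendsto (fun k : ℕ => ((k : ℝ) - l) / ((k : ℝ) + 1)) atTop (𝓝 1) := by
    have : ∀ k : ℕ, ((k : ℝ) - l) / ((k : ℝ) + 1) = 1 - (l + 1) / ((k : ℝ) + 1) := by
      intro k
      have hk1 : ((k : ℝ) + 1) ≠ 0 := by positivity
      field_simp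
      ring
    simp only [this]
    simpa using (tendsto_const_nhds.sub h0)
  have := h1.pow 2
  simpa using this

lemma nice_d1 {a : ℕ → ℝ} (h : Nice a) : Nice (RV3.d1 a) := by
  obtain ⟨ρ, hρ0, hρr, hρt⟩ := h.ratio
  refine ⟨fun k => mul_nonneg (by positivity) (h.nonneg _), ⟨fun k =>
    (((k : ℝ) + 2) / ((k : ℝ) + 1)) * ρ (k + 1), fun k => mul_nonneg (by positivity) (hρ0 _),
    fun k => ?_, ?_⟩⟩
  · have hk1 : ((k : ℝ) + 1) ≠ 0 := by positivity
    simp only [RV3.d1, hρr (k + 1)]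
    push_cast
    field_simp
    ring
  · have h2 : Tendsto (fun k : ℕ => ((k : ℝ) + 2) / ((k : ℝ) + 1)) atTop (𝓝 1) := by
      have h0 : Tendsto (fun k : ℕ => (1 : ℝ) / ((k : ℝ) + 1)) atTop (𝓝 0) := by
        have := (tendsto_const_div_atTop_nhds_zero_nat (1 : ℝ)).comp (tendsto_add_atTop_nat 1)
        exact this.congr fun k => by simp [Function.comp]
      have : ∀ k : ℕ, ((k : ℝ) + 2) / ((k : ℝ) + 1) = 1 + 1 / ((k : ℝ) + 1) := by
        intro k
        have hk1 : ((k : ℝ) + 1) ≠ 0 := by positivity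
        field_simp
        ring
      simp only [this]
      simpa using (tendsto_const_nhds.add h0)
    have hρ' : Tendsto (fun k : ℕ => ρ (k + 1)) atTop (𝓝 1) :=
      hρt.comp (tendsto_add_atTop_nat 1)
    simpa using h2.mul hρ'

lemma Nice.summable {a : ℕ → ℝ} (h : Nice a) {r : ℝ} (hr0 : 0 ≤ r) (hr1 : r < 1) :
    Summable (fun k => a k * r ^ k) := by
  obtain ⟨ρ, hρ0, hρr, hρt⟩ := h.ratio
  apply summable_of_ratio_norm_eventually_le (r := (1 + r) / 2) (by linarith)
  have hev : ∀ᶠ k in atTop, ρ k * r < (1 + r) / 2 := by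
    have ht : Tendsto (fun k => ρ k * r) atTop (𝓝 (1 * r)) := hρt.mul_const r
    exact ht.eventually_lt_const (by linarith)
  filter_upwards [hev] with k hk
  have h1 : a (k + 1) * r ^ (k + 1) = (ρ k * r) * (a k * r ^ k) := by
    rw [hρr]; ring
  have hn0 : 0 ≤ a k * r ^ k := mul_nonneg (h.nonneg _) (by positivity)
  have hn1 : 0 ≤ a (k + 1) * r ^ (k + 1) := mul_nonneg (h.nonneg _) (by positivity)
  rw [Real.norm_eq_abs, Real.norm_eq_abs, abs_of_nonneg hn1, abs_of_nonneg hn0, h1]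
  exact mul_le_mul_of_nonneg_right hk.le hn0

noncomputable def PS (a : ℕ → ℝ) (t : ℝ) : ℝ := ∑' k, a k * t ^ k

lemma Nice.hasDerivAt_PS {a : ℕ → ℝ} (h : Nice a) {x : ℝ} (hx : x ∈ Ioo (0 : ℝ) 1) :
    HasDerivAt (PS a) (PS (d1 a) x) x := by
  obtain ⟨hx0, hx1⟩ := hx
  set r : ℝ := (x + 1) / 2 with hr
  have hxr : x < r := by rw [hr]; linarith
  have hr1 : r < 1 := by rw [hr]; linarith
  have hr0 : 0 < r := by rw [hr]; linarith
  have hd1sum : Summable (fun k => d1 a k * r ^ k) := (nice_d1 h).summable hr0.le hr1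
  have husum : Summable (fun k => a k * ((k : ℝ) * r ^ (k - 1))) := by
    rw [← summable_nat_add_iff 1]
    refine hd1sum.congr fun k => ?_
    simp only [d1, Nat.add_sub_cancel]
    push_cast
    ring
  have key : ∀ y ∈ Ioo (-r) r,
      HasDerivAt (fun t => ∑' k, a k * t ^ k) (∑' k, a k * ((k : ℝ) * y ^ (k - 1))) y := by
    intro y hy
    refine hasDerivAt_tsum_of_isPreconnected husum isOpen_Ioo
      (convex_Ioo _ _).isPreconnected
      (fun k t _ => (hasDerivAt_pow k t).const_mul (a k))
      (fun k t ht => ?_) (show x ∈ Ioo (-r) r from ⟨by linarith, hxr⟩)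
      (h.summable hx0.le hx1) hy
    · have h1 : |t| ≤ r := by
        rw [abs_le]; exact ⟨ht.1.le, ht.2.le⟩
      have h2 : |t| ^ (k - 1) ≤ r ^ (k - 1) := pow_le_pow_left₀ (abs_nonneg _) h1 _
      calc ‖a k * ((k : ℝ) * t ^ (k - 1))‖ = a k * ((k : ℝ) * |t| ^ (k - 1)) := by
            rw [norm_mul, norm_mul, Real.norm_eq_abs, Real.norm_eq_abs, Real.norm_eq_abs,
              abs_of_nonneg (h.nonneg k), abs_of_nonneg (by positivity : (0:ℝ) ≤ (k:ℝ)),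
              abs_pow]
        _ ≤ a k * ((k : ℝ) * r ^ (k - 1)) := by
            apply mul_le_mul_of_nonneg_left _ (h.nonneg k)
            exact mul_le_mul_of_nonneg_left h2 (by positivity)
  have hder := key x ⟨by linarith, hxr⟩
  have heq : (∑' k, a k * ((k : ℝ) * x ^ (k - 1))) = PS (d1 a) x := by
    have hxsum : Summable (fun k => a k * ((k : ℝ) * x ^ (k - 1))) := by
      rw [← summable_nat_add_iff 1]
      refine ((nice_d1 h).summable hx0.le hx1).congr fun k => ?_
      simp only [d1, Nat.add_sub_cancel]
      push_cast
      ring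
    rw [Summable.tsum_eq_zero_add hxsum]
    simp only [Nat.cast_zero, zero_mul, mul_zero, zero_add, Nat.add_sub_cancel]
    refine tsum_congr fun k => ?_
    simp only [PS, d1]
    push_cast
    ring
  rw [← heq]
  exact hder
lemma F_ode (l : ℝ) {x : ℝ} (hx : x ∈ Ioo (0 : ℝ) 1) :
    x * (1 - x) * PS (d1 (d1 (c l))) x + (1 - (1 - 2 * l) * x) * PS (d1 (c l)) x
      - l ^ 2 * PS (c l) x = 0 := by
  obtain ⟨hx0, hx1⟩ := hx
  set c0 := c l
  set c1 := d1 c0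
  set c2 := d1 c1
  have hn0 : Nice c0 := nice_c l
  have hn1 : Nice c1 := nice_d1 hn0
  have hn2 : Nice c2 := nice_d1 hn1
  have H0 : HasSum (fun k => c0 k * x ^ k) (PS c0 x) := (hn0.summable hx0.le hx1).hasSum
  have H1 : HasSum (fun k => c1 k * x ^ k) (PS c1 x) := (hn1.summable hx0.le hx1).hasSum
  have H2 : HasSum (fun k => c2 k * x ^ k) (PS c2 x) := (hn2.summable hx0.le hx1).hasSum
  -- A1 : sum of k(k+1) c0(k+1) x^k = x * PS c2 x
  have A1 : HasSum (fun k : ℕ => ((k : ℝ) * ((k : ℝ) + 1) * c0 (k + 1)) * x ^ k)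
      (x * PS c2 x) := by
    have h := H2.mul_left x
    have hfe : (fun k : ℕ => x * (c2 k * x ^ k)) =
        (fun k : ℕ => (((k + 1 : ℕ) : ℝ) * (((k + 1 : ℕ) : ℝ) + 1) * c0 ((k + 1) + 1))
          * x ^ (k + 1)) := by
      funext k
      simp only [c2, c1, d1]
      push_cast
      ring
    rw [hfe] at h
    have := (hasSum_nat_add_iff (f := fun k : ℕ =>
      ((k : ℝ) * ((k : ℝ) + 1) * c0 (k + 1)) * x ^ k) 1).mp h
    simpa using this
  -- A2 : sum of k(k-1) c0 k x^k = x^2 * PS c2 x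
  have A2 : HasSum (fun k : ℕ => ((k : ℝ) * ((k : ℝ) - 1) * c0 k) * x ^ k)
      (x ^ 2 * PS c2 x) := by
    have h := H2.mul_left (x ^ 2)
    have hfe : (fun k : ℕ => x ^ 2 * (c2 k * x ^ k)) =
        (fun k : ℕ => (((k + 2 : ℕ) : ℝ) * (((k + 2 : ℕ) : ℝ) - 1) * c0 (k + 2))
          * x ^ (k + 2)) := by
      funext k
      simp only [c2, c1, d1]
      push_cast
      ring
    rw [hfe] at h
    have := (hasSum_nat_add_iff (f := fun k : ℕ =>
      ((k : ℝ) * ((k : ℝ) - 1) * c0 k) * x ^ k) 2).mp h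
    simpa [Finset.sum_range_succ] using this
  -- A4 : sum of k c0 k x^k = x * PS c1 x
  have A4 : HasSum (fun k : ℕ => ((k : ℝ) * c0 k) * x ^ k) (x * PS c1 x) := by
    have h := H1.mul_left x
    have hfe : (fun k : ℕ => x * (c1 k * x ^ k)) =
        (fun k : ℕ => (((k + 1 : ℕ) : ℝ) * c0 (k + 1)) * x ^ (k + 1)) := by
      funext k
      simp only [c1, d1]
      push_cast
      ring
    rw [hfe] at h
    have := (hasSum_nat_add_iff (f := fun k : ℕ => ((k : ℝ) * c0 k) * x ^ k) 1).mp h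
    simpa using this
  have TOT := (((A1.sub A2).add H1).sub ((A4.mul_left (1 - 2 * l)).add
    (H0.mul_left (l ^ 2))))
  have hzero : (fun k : ℕ => (((k : ℝ) * ((k : ℝ) + 1) * c0 (k + 1)) * x ^ k
      - ((k : ℝ) * ((k : ℝ) - 1) * c0 k) * x ^ k + c1 k * x ^ k)
      - ((1 - 2 * l) * (((k : ℝ) * c0 k) * x ^ k) + l ^ 2 * (c0 k * x ^ k)))
      = (fun _ : ℕ => (0 : ℝ)) := by
    funext k
    have hrec := c_rec l k
    simp only [c1, d1, c0] at *
    linear_combination (x ^ k) * hrec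
  rw [hzero] at TOT
  have := TOT.unique hasSum_zero
  linear_combination this
noncomputable def G (l u : ℝ) : ℝ := (1 - u) ^ (-l) * PS (c l) u
noncomputable def G1 (l u : ℝ) : ℝ :=
  l * (1 - u) ^ (-l - 1) * PS (c l) u + (1 - u) ^ (-l) * PS (d1 (c l)) u
noncomputable def G2 (l u : ℝ) : ℝ :=
  l * (l + 1) * (1 - u) ^ (-l - 2) * PS (c l) u
    + 2 * l * (1 - u) ^ (-l - 1) * PS (d1 (c l)) u
    + (1 - u) ^ (-l) * PS (d1 (d1 (c l))) u

lemma hasDerivAt_one_sub_rpow (p : ℝ) {u : ℝ} (hu : u < 1) :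
    HasDerivAt (fun v : ℝ => (1 - v) ^ p) (-p * (1 - u) ^ (p - 1)) u := by
  have hne : (1 : ℝ) - u ≠ 0 := by linarith
  have hout := Real.hasDerivAt_rpow_const (x := 1 - u) (p := p) (Or.inl hne)
  have hin : HasDerivAt (fun v : ℝ => 1 - v) (-1) u := by
    simpa using (hasDerivAt_id u).const_sub 1
  have := hout.comp u hin
  exact this.congr_deriv (by ring)

lemma hasDerivAt_G (l : ℝ) {u : ℝ} (hu : u ∈ Ioo (0 : ℝ) 1) :
    HasDerivAt (G l) (G1 l u) u := by
  have h1 : HasDerivAt (fun v : ℝ => (1 - v) ^ (-l)) (l * (1 - u) ^ (-l - 1)) u := by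
    have := hasDerivAt_one_sub_rpow (-l) hu.2
    convert this using 1
    all_goals ring_nf
  have h2 := (nice_c l).hasDerivAt_PS hu
  have := h1.mul h2
  exact this.congr_deriv (by unfold G1; ring)

lemma hasDerivAt_G1 (l : ℝ) {u : ℝ} (hu : u ∈ Ioo (0 : ℝ) 1) :
    HasDerivAt (G1 l) (G2 l u) u := by
  have e1 : -l - 1 - 1 = -l - 2 := by ring
  have hA : HasDerivAt (fun v : ℝ => (1 - v) ^ (-l - 1)) ((l + 1) * (1 - u) ^ (-l - 2)) u := by
    have := hasDerivAt_one_sub_rpow (-l - 1) hu.2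
    rw [e1] at this
    convert this using 1
    ring
  have hB : HasDerivAt (fun v : ℝ => (1 - v) ^ (-l)) (l * (1 - u) ^ (-l - 1)) u := by
    have := hasDerivAt_one_sub_rpow (-l) hu.2
    convert this using 1
    all_goals ring_nf
  have hF0 := (nice_c l).hasDerivAt_PS hu
  have hF1 := (nice_d1 (nice_c l)).hasDerivAt_PS hu
  have hT1 := ((hA.const_mul l).mul hF0)
  have hT2 := (hB.mul hF1)
  have := hT1.add hT2
  exact this.congr_deriv (by unfold G2; ring)

lemma G2_scaled (l : ℝ) {u : ℝ} (hu : u ∈ Ioo (0 : ℝ) 1) :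
    (1 - u) ^ 2 * G2 l u = (1 - u) ^ (-l) *
      (l * (l + 1) * PS (c l) u + 2 * l * (1 - u) * PS (d1 (c l)) u
        + (1 - u) ^ 2 * PS (d1 (d1 (c l))) u) := by
  have hpos : (0 : ℝ) < 1 - u := by linarith [hu.2]
  have h1 : (1 - u) ^ (-l - 1) * (1 - u) = (1 - u) ^ (-l) := by
    nth_rewrite 2 [← Real.rpow_one (1 - u)]
    rw [← Real.rpow_add hpos]
    norm_num
  have h2 : (1 - u) ^ (-l - 2) * (1 - u) ^ 2 = (1 - u) ^ (-l) := by
    rw [show ((1 - u) ^ 2 : ℝ) = (1 - u) ^ ((2 : ℕ) : ℝ) from (Real.rpow_natCast _ 2).symm,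
      ← Real.rpow_add hpos]
    norm_num
  simp only [G2]
  linear_combination (l * (l + 1) * PS (c l) u) * h2
    + (2 * l * PS (d1 (c l)) u * (1 - u)) * h1
    + (PS (d1 (d1 (c l))) u) * (by ring : ((1-u):ℝ)^2 * (1-u)^(-l) = (1-u)^(-l) * (1-u)^2)

lemma G1_scaled (l : ℝ) {u : ℝ} (hu : u ∈ Ioo (0 : ℝ) 1) :
    (1 - u) ^ 2 * G1 l u = (1 - u) ^ (-l) * (1 - u) *
      (l * PS (c l) u + (1 - u) * PS (d1 (c l)) u) := by
  have hpos : (0 : ℝ) < 1 - u := by linarith [hu.2]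
  have h1 : (1 - u) ^ (-l - 1) * (1 - u) = (1 - u) ^ (-l) := by
    nth_rewrite 2 [← Real.rpow_one (1 - u)]
    rw [← Real.rpow_add hpos]
    norm_num
  simp only [G1]
  linear_combination (l * PS (c l) u * (1 - u)) * h1

lemma G_ode (l : ℝ) {u : ℝ} (hu : u ∈ Ioo (0 : ℝ) 1) :
    u * ((1 - u) ^ 2 * G2 l u) + (1 - u) ^ 2 * G1 l u - l * (l + 1) * G l u = 0 := by
  rw [G2_scaled l hu, G1_scaled l hu]
  have hode := F_ode l hu
  simp only [G]
  linear_combination ((1 - u) ^ (-l) * (1 - u)) * hode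

lemma hypSum_eq_PS (l t : ℝ) : hypSum l t = PS (c l) t := rfl

lemma Nice.contDiffOn_two {a : ℕ → ℝ} (h : Nice a) :
    ContDiffOn ℝ 2 (PS a) (Ioo (0 : ℝ) 1) := by
  rw [show (2 : WithTop ℕ∞) = 1 + 1 by norm_num,
    contDiffOn_succ_iff_deriv_of_isOpen isOpen_Ioo]
  refine ⟨fun x hx => (h.hasDerivAt_PS hx).differentiableAt.differentiableWithinAt,
    by simp, ?_⟩
  have h1 : ContDiffOn ℝ 1 (PS (d1 a)) (Ioo (0 : ℝ) 1) := by
    rw [show (1 : WithTop ℕ∞) = 0 + 1 by norm_num,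
      contDiffOn_succ_iff_deriv_of_isOpen isOpen_Ioo]
    refine ⟨fun x hx => ((nice_d1 h).hasDerivAt_PS hx).differentiableAt.differentiableWithinAt,
      by simp, ?_⟩
    rw [contDiffOn_zero]
    have hc : ContinuousOn (PS (d1 (d1 a))) (Ioo (0 : ℝ) 1) := fun x hx =>
      (((nice_d1 (nice_d1 h)).hasDerivAt_PS hx).continuousAt).continuousWithinAt
    exact hc.congr fun x hx => ((nice_d1 h).hasDerivAt_PS hx).deriv
  exact h1.congr fun x hx => (h.hasDerivAt_PS hx).deriv

/-- The argument function t(z,s). -/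
noncomputable def Tf (ξ η z s : ℝ) : ℝ :=
  ((z ^ 2 - ξ ^ 2) * (η ^ 2 - s ^ 2)) / ((z ^ 2 - η ^ 2) * (ξ ^ 2 - s ^ 2))

/-- ∂t/∂s. -/
noncomputable def Tsf (ξ η z s : ℝ) : ℝ :=
  -2 * s * (ξ ^ 2 - η ^ 2) * (z ^ 2 - ξ ^ 2) / ((z ^ 2 - η ^ 2) * (ξ ^ 2 - s ^ 2) ^ 2)

/-- ∂t/∂z. -/
noncomputable def Tzf (ξ η z s : ℝ) : ℝ :=
  2 * z * (ξ ^ 2 - η ^ 2) * (η ^ 2 - s ^ 2) / ((z ^ 2 - η ^ 2) ^ 2 * (ξ ^ 2 - s ^ 2))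

/-- ∂²t/∂z∂s. -/
noncomputable def Tzsf (ξ η z s : ℝ) : ℝ :=
  -4 * z * s * (ξ ^ 2 - η ^ 2) ^ 2 / ((z ^ 2 - η ^ 2) ^ 2 * (ξ ^ 2 - s ^ 2) ^ 2)

section Region

variable {η ξ z s : ℝ}

lemma reg_A (hη : 0 < η) (hξ : η < ξ) (hz : ξ ≤ z) : 0 < z ^ 2 - η ^ 2 := by nlinarith

lemma reg_B (hη : 0 < η) (hξ : η < ξ) (hs0 : 0 ≤ s) (hsη : s ≤ η) : 0 < ξ ^ 2 - s ^ 2 := by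
  nlinarith

lemma reg_C (hη : 0 < η) (hξ : η < ξ) (hs0 : 0 ≤ s) (hsη : s ≤ η) (hz : ξ ≤ z) :
    0 < z ^ 2 - s ^ 2 := by nlinarith

lemma reg_D (hη : 0 < η) (hξ : η < ξ) : 0 < ξ ^ 2 - η ^ 2 := by nlinarith

lemma T_mem_Ico (hη : 0 < η) (hξ : η < ξ) (hs0 : 0 ≤ s) (hsη : s < η) (hz : ξ ≤ z) :
    Tf ξ η z s ∈ Ico (0 : ℝ) 1 := by
  have hA := reg_A hη hξ hz
  have hB := reg_B hη hξ hs0 hsη.le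
  have hC := reg_C hη hξ hs0 hsη.le hz
  have hD := reg_D hη hξ
  have hnum : 0 ≤ (z ^ 2 - ξ ^ 2) * (η ^ 2 - s ^ 2) :=
    mul_nonneg (by nlinarith) (by nlinarith)
  constructor
  · exact div_nonneg hnum (by positivity)
  · rw [Tf, div_lt_one (by positivity)]
    nlinarith [mul_pos hC hD]

lemma T_mem_Ioo (hη : 0 < η) (hξ : η < ξ) (hs0 : 0 < s) (hsη : s < η) (hz : ξ < z) :
    Tf ξ η z s ∈ Ioo (0 : ℝ) 1 := by
  have h := T_mem_Ico hη hξ hs0.le hsη hz.le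
  refine ⟨?_, h.2⟩
  have hA := reg_A hη hξ hz.le
  have hB := reg_B hη hξ hs0.le hsη.le
  have hnum : 0 < (z ^ 2 - ξ ^ 2) * (η ^ 2 - s ^ 2) :=
    mul_pos (by nlinarith) (by nlinarith)
  exact div_pos hnum (by positivity)

lemma one_sub_T (hη : 0 < η) (hξ : η < ξ) (hs0 : 0 ≤ s) (hsη : s ≤ η) (hz : ξ ≤ z) :
    1 - Tf ξ η z s = ((z ^ 2 - s ^ 2) * (ξ ^ 2 - η ^ 2)) /
      ((z ^ 2 - η ^ 2) * (ξ ^ 2 - s ^ 2)) := by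
  have hA := (reg_A hη hξ hz).ne'
  have hB := (reg_B hη hξ hs0 hsη).ne'
  rw [Tf]
  field_simp
  ring

lemma v3_eq_G (l : ℝ) (hη : 0 < η) (hξ : η < ξ) (hs0 : 0 < s) (hsη : s < η) (hz : ξ < z) :
    riemannV3 l z s ξ η = G l (Tf ξ η z s) := by
  have hA := reg_A hη hξ hz.le
  have hB := reg_B hη hξ hs0.le hsη.le
  have hC := reg_C hη hξ hs0.le hsη.le hz.le
  have hD := reg_D hη hξ
  have h1T := one_sub_T hη hξ hs0.le hsη.le hz.le
  have hTpos : 0 < 1 - Tf ξ η z s := by rw [h1T]; positivity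
  have hP : ((z ^ 2 - η ^ 2) * (ξ ^ 2 - s ^ 2)) / ((z ^ 2 - s ^ 2) * (ξ ^ 2 - η ^ 2))
      = (1 - Tf ξ η z s)⁻¹ := by rw [h1T, inv_div]
  rw [riemannV3, hP, hypSum_eq_PS, G, Real.inv_rpow hTpos.le, ← Real.rpow_neg hTpos.le]
  rfl

lemma hasDerivAt_Tf_s (hA : z ^ 2 - η ^ 2 ≠ 0) (hB : ξ ^ 2 - s ^ 2 ≠ 0) :
    HasDerivAt (fun s' => Tf ξ η z s') (Tsf ξ η z s) s := by
  have hs2 : HasDerivAt (fun y : ℝ => y ^ 2) (2 * s) s := by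
    simpa using hasDerivAt_pow 2 s
  have hnum : HasDerivAt (fun s' : ℝ => (z ^ 2 - ξ ^ 2) * (η ^ 2 - s' ^ 2))
      ((z ^ 2 - ξ ^ 2) * -(2 * s)) s := (hs2.const_sub (η ^ 2)).const_mul _
  have hden : HasDerivAt (fun s' : ℝ => (z ^ 2 - η ^ 2) * (ξ ^ 2 - s' ^ 2))
      ((z ^ 2 - η ^ 2) * -(2 * s)) s := (hs2.const_sub (ξ ^ 2)).const_mul _
  have hden_ne : (z ^ 2 - η ^ 2) * (ξ ^ 2 - s ^ 2) ≠ 0 := mul_ne_zero hA hB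
  have h := hnum.div hden hden_ne
  refine h.congr_deriv ?_
  simp only [Tsf]
  field_simp
  ring

lemma hasDerivAt_Tf_z (hA : z ^ 2 - η ^ 2 ≠ 0) (hB : ξ ^ 2 - s ^ 2 ≠ 0) :
    HasDerivAt (fun z' => Tf ξ η z' s) (Tzf ξ η z s) z := by
  have hz2 : HasDerivAt (fun y : ℝ => y ^ 2) (2 * z) z := by
    simpa using hasDerivAt_pow 2 z
  have hnum : HasDerivAt (fun z' : ℝ => (z' ^ 2 - ξ ^ 2) * (η ^ 2 - s ^ 2))
      (2 * z * (η ^ 2 - s ^ 2)) z := (hz2.sub_const (ξ ^ 2)).mul_const _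
  have hden : HasDerivAt (fun z' : ℝ => (z' ^ 2 - η ^ 2) * (ξ ^ 2 - s ^ 2))
      (2 * z * (ξ ^ 2 - s ^ 2)) z := (hz2.sub_const (η ^ 2)).mul_const _
  have hden_ne : (z ^ 2 - η ^ 2) * (ξ ^ 2 - s ^ 2) ≠ 0 := mul_ne_zero hA hB
  have h := hnum.div hden hden_ne
  refine h.congr_deriv ?_
  simp only [Tzf]
  field_simp
  ring

lemma hasDerivAt_Tsf_z (hA : z ^ 2 - η ^ 2 ≠ 0) (hB : ξ ^ 2 - s ^ 2 ≠ 0) :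
    HasDerivAt (fun z' => Tsf ξ η z' s) (Tzsf ξ η z s) z := by
  have hz2 : HasDerivAt (fun y : ℝ => y ^ 2) (2 * z) z := by
    simpa using hasDerivAt_pow 2 z
  have hnum : HasDerivAt (fun z' : ℝ => -2 * s * (ξ ^ 2 - η ^ 2) * (z' ^ 2 - ξ ^ 2))
      (-2 * s * (ξ ^ 2 - η ^ 2) * (2 * z)) z := (hz2.sub_const (ξ ^ 2)).const_mul _
  have hden : HasDerivAt (fun z' : ℝ => (z' ^ 2 - η ^ 2) * (ξ ^ 2 - s ^ 2) ^ 2)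
      (2 * z * (ξ ^ 2 - s ^ 2) ^ 2) z := (hz2.sub_const (η ^ 2)).mul_const _
  have hden_ne : (z ^ 2 - η ^ 2) * (ξ ^ 2 - s ^ 2) ^ 2 ≠ 0 := mul_ne_zero hA (pow_ne_zero 2 hB)
  have h := hnum.div hden hden_ne
  refine h.congr_deriv ?_
  simp only [Tzsf]
  field_simp
  ring

lemma hypSum_zero (l : ℝ) : hypSum l 0 = 1 := by
  rw [hypSum, tsum_eq_single 0]
  · norm_num
  · intro b hb
    simp [zero_pow hb]

end Region

end RV3

end RV3Aux

open RV3 Filter Topology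

/-- The function v₃ given by (3.7) is the Riemann function of the characteristic Goursat
problem (3.6): it is C², solves ∂²v₃/∂z∂s + 4l(l+1)zs/(z²−s²)² v₃ = 0, and equals 1 on
the characteristics z = ξ and s = η. -/
theorem riemannV3_solves_goursat (l η ξ : ℝ) (hl : -(1/2) ≤ l)
    (hη : 0 < η) (hξ : η < ξ) :
    (∀ z s : ℝ, 0 ≤ s → s < η → ξ ≤ z →
      ((z ^ 2 - ξ ^ 2) * (η ^ 2 - s ^ 2)) / ((z ^ 2 - η ^ 2) * (ξ ^ 2 - s ^ 2))
        ∈ Ico (0 : ℝ) 1 ∧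
      Summable (fun k : ℕ =>
        ((ascPochhammer ℝ k).eval (-l) / (Nat.factorial k : ℝ)) ^ 2 *
          (((z ^ 2 - ξ ^ 2) * (η ^ 2 - s ^ 2)) /
            ((z ^ 2 - η ^ 2) * (ξ ^ 2 - s ^ 2))) ^ k)) ∧
    ContDiffOn ℝ 2 (fun pr : ℝ × ℝ => riemannV3 l pr.1 pr.2 ξ η)
      {pr : ℝ × ℝ | 0 < pr.2 ∧ pr.2 < η ∧ ξ < pr.1} ∧
    (∀ z s : ℝ, 0 < s → s < η → ξ < z →
      deriv (fun z' => deriv (fun s' => riemannV3 l z' s' ξ η) s) z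
        + (4 * l * (l + 1) * z * s / (z ^ 2 - s ^ 2) ^ 2) * riemannV3 l z s ξ η = 0) ∧
    (∀ s ∈ Icc (0 : ℝ) η, riemannV3 l ξ s ξ η = 1) ∧
    (∀ z ∈ Ici ξ, riemannV3 l z η ξ η = 1) := by
  have hξ0 : 0 < ξ := hη.trans hξ
  refine ⟨?_, ?_, ?_, ?_, ?_⟩
  · -- membership and summability
    intro z s hs0 hsη hz
    have h := T_mem_Ico hη hξ hs0 hsη hz
    exact ⟨h, (nice_c l).summable h.1 h.2⟩
  · -- smoothness
    have hGsm : ContDiffOn ℝ 2 (G l) (Ioo (0 : ℝ) 1) := by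
      have h1 : ContDiffOn ℝ 2 (fun u : ℝ => (1 - u) ^ (-l)) (Ioo (0 : ℝ) 1) := by
        intro u hu
        have hne : (1 : ℝ) - u ≠ 0 := by
          have := hu.2
          simp only [mem_Ioo] at hu
          linarith [hu.2]
        exact ((Real.contDiffAt_rpow_const_of_ne (p := -l) hne).comp u
          ((contDiff_const.sub contDiff_id).contDiffAt)).contDiffWithinAt
      exact h1.mul (nice_c l).contDiffOn_two
    have hTsm : ContDiffOn ℝ 2 (fun pr : ℝ × ℝ => Tf ξ η pr.1 pr.2)
        {pr : ℝ × ℝ | 0 < pr.2 ∧ pr.2 < η ∧ ξ < pr.1} := by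
      have hnum : ContDiff ℝ 2 (fun pr : ℝ × ℝ => (pr.1 ^ 2 - ξ ^ 2) * (η ^ 2 - pr.2 ^ 2)) := by
        fun_prop
      have hden : ContDiff ℝ 2 (fun pr : ℝ × ℝ => (pr.1 ^ 2 - η ^ 2) * (ξ ^ 2 - pr.2 ^ 2)) := by
        fun_prop
      exact hnum.contDiffOn.div hden.contDiffOn (fun pr hpr =>
        mul_ne_zero (reg_A hη hξ hpr.2.2.le).ne' (reg_B hη hξ hpr.1.le hpr.2.1.le).ne')
    have hmaps : MapsTo (fun pr : ℝ × ℝ => Tf ξ η pr.1 pr.2)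
        {pr : ℝ × ℝ | 0 < pr.2 ∧ pr.2 < η ∧ ξ < pr.1} (Ioo (0 : ℝ) 1) :=
      fun pr hpr => T_mem_Ioo hη hξ hpr.1 hpr.2.1 hpr.2.2
    exact (hGsm.comp hTsm hmaps).congr
      (fun pr hpr => v3_eq_G l hη hξ hpr.1 hpr.2.1 hpr.2.2)
  · -- the PDE
    intro z s hs0 hsη hz
    have hA := (reg_A hη hξ hz.le).ne'
    have hB := (reg_B hη hξ hs0.le hsη.le).ne'
    have hC := (reg_C hη hξ hs0.le hsη.le hz.le).ne'
    have hu := T_mem_Ioo hη hξ hs0 hsη hz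
    have inner_eq : ∀ z', ξ < z' → deriv (fun s' => riemannV3 l z' s' ξ η) s
        = G1 l (Tf ξ η z' s) * Tsf ξ η z' s := by
      intro z' hz'
      have hA' := (reg_A hη hξ hz'.le).ne'
      have hu' := T_mem_Ioo hη hξ hs0 hsη hz'
      have hTs : HasDerivAt (fun s'' => Tf ξ η z' s'') (Tsf ξ η z' s) s :=
        hasDerivAt_Tf_s hA' hB
      have hcomp : HasDerivAt (fun s'' => G l (Tf ξ η z' s''))
          (G1 l (Tf ξ η z' s) * Tsf ξ η z' s) s :=
        (hasDerivAt_G l hu').comp s hTs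
      have hev : (fun s'' => riemannV3 l z' s'' ξ η) =ᶠ[𝓝 s]
          (fun s'' => G l (Tf ξ η z' s'')) := by
        filter_upwards [Ioo_mem_nhds hs0 hsη] with s'' hs''
        exact v3_eq_G l hη hξ hs''.1 hs''.2 hz'
      rw [hev.deriv_eq]
      exact hcomp.deriv
    have hev2 : (fun z' => deriv (fun s' => riemannV3 l z' s' ξ η) s) =ᶠ[𝓝 z]
        (fun z' => G1 l (Tf ξ η z' s) * Tsf ξ η z' s) := by
      filter_upwards [Ioi_mem_nhds hz] with z' hz'
      exact inner_eq z' hz'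
    have hTz : HasDerivAt (fun z' => Tf ξ η z' s) (Tzf ξ η z s) z :=
      hasDerivAt_Tf_z hA hB
    have hTzs : HasDerivAt (fun z' => Tsf ξ η z' s) (Tzsf ξ η z s) z :=
      hasDerivAt_Tsf_z hA hB
    have hcompz : HasDerivAt (fun z' => G1 l (Tf ξ η z' s))
        (G2 l (Tf ξ η z s) * Tzf ξ η z s) z :=
      by have hG1 := hasDerivAt_G1 l hu; exact hG1.comp z hTz
    have houter : deriv (fun z' => deriv (fun s' => riemannV3 l z' s' ξ η) s) z
        = G2 l (Tf ξ η z s) * Tzf ξ η z s * Tsf ξ η z s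
          + G1 l (Tf ξ η z s) * Tzsf ξ η z s := by
      rw [hev2.deriv_eq]
      exact (hcompz.mul hTzs).deriv
    have key1 : Tzf ξ η z s * Tsf ξ η z s
        = -4 * z * s * Tf ξ η z s * (1 - Tf ξ η z s) ^ 2 / (z ^ 2 - s ^ 2) ^ 2 := by
      rw [one_sub_T hη hξ hs0.le hsη.le hz.le]
      simp only [Tzf, Tsf, Tf]
      field_simp
      ring
    have key2 : Tzsf ξ η z s
        = -4 * z * s * (1 - Tf ξ η z s) ^ 2 / (z ^ 2 - s ^ 2) ^ 2 := by
      rw [one_sub_T hη hξ hs0.le hsη.le hz.le]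
      simp only [Tzsf, Tf]
      field_simp
    have hode := G_ode l hu
    rw [houter, v3_eq_G l hη hξ hs0 hsη hz]
    linear_combination (G2 l (Tf ξ η z s)) * key1 + (G1 l (Tf ξ η z s)) * key2
      + (-4 * z * s / (z ^ 2 - s ^ 2) ^ 2) * hode
  · -- value on z = ξ
    intro s hs
    obtain ⟨hs0, hsη⟩ := hs
    have hB := reg_B hη hξ hs0 hsη
    have hD := reg_D hη hξ
    have h1 : ((ξ ^ 2 - η ^ 2) * (ξ ^ 2 - s ^ 2)) / ((ξ ^ 2 - s ^ 2) * (ξ ^ 2 - η ^ 2))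
        = 1 := by
      rw [mul_comm]
      exact div_self (by positivity)
    have h2 : ((ξ ^ 2 - ξ ^ 2) * (η ^ 2 - s ^ 2)) / ((ξ ^ 2 - η ^ 2) * (ξ ^ 2 - s ^ 2))
        = 0 := by simp
    rw [riemannV3, h1, h2, Real.one_rpow, hypSum_zero, one_mul]
  · -- value on s = η
    intro z hz
    have hA := reg_A hη hξ hz
    have hD := reg_D hη hξ
    have h1 : ((z ^ 2 - η ^ 2) * (ξ ^ 2 - η ^ 2)) / ((z ^ 2 - η ^ 2) * (ξ ^ 2 - η ^ 2))
        = 1 := div_self (by positivity)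
    have h2 : ((z ^ 2 - ξ ^ 2) * (η ^ 2 - η ^ 2)) / ((z ^ 2 - η ^ 2) * (ξ ^ 2 - η ^ 2))
        = 0 := by simp
    rw [riemannV3, h1, h2, Real.one_rpow, hypSum_zero, one_mul]
end
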